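/- arXiv:1106.1707 — 3 statements merged into one kernel-verified Lean document; each statement's English description precedes it below -/
import Mathlib

section
/- Under the same hypotheses on Φ, there exists K₀ > 1 such that for all sufficiently large L, all a ∈ [0,1], and all x with Φ(x) ≠ 0, one has |f''(x)| ≤ K₀·L/d_S(x)², where d_S(x) is the distance from x to the zero set S of Φ. -/
open Metric Set Filter Topology

/-- |f''(x)| ≤ K₀·L/d_S(x)². -/
theorem stmt2 (Φ : ℝ → ℝ) (hΦ : ContDiff ℝ 2 Φ)
    (hper : ∀ x, Φ (x + 1) = Φ x)
    (hS' : ∀ x, Φ x = 0 → deriv Φ x ≠ 0)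
    (hC' : ∀ x, deriv Φ x = 0 → deriv (deriv Φ) x ≠ 0)
    (hSne : ∃ x, Φ x = 0) :
    ∃ K₀ : ℝ, 1 < K₀ ∧ ∃ L₀ : ℝ, ∀ L : ℝ, L ≥ L₀ →
      ∀ a ∈ Set.Icc (0:ℝ) 1, ∀ x : ℝ, Φ x ≠ 0 →
      |deriv (deriv (fun z => z + a + L * Real.log |Φ z|)) x|
        ≤ K₀ * L / (Metric.infDist x {y : ℝ | Φ y = 0}) ^ 2 := by
  have hcont : Continuous Φ := hΦ.continuous
  set S : Set ℝ := {y : ℝ | Φ y = 0} with hSdef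
  have hperiodic : Function.Periodic Φ 1 := hper
  have hshift : ∀ (x : ℝ) (n : ℤ), Φ (x - n) = Φ x := by
    intro x n
    simpa using hperiodic.sub_zsmul_eq n
  have hSclosed : IsClosed S := isClosed_eq hcont continuous_const
  obtain ⟨s₀, hs₀⟩ := hSne
  have hSne' : S.Nonempty := ⟨s₀, hs₀⟩
  -- invariance of infDist under integer translation
  have hd_shift : ∀ (x : ℝ) (n : ℤ), Metric.infDist (x - n) S = Metric.infDist x S := by
    intro x n
    have himg : (fun y : ℝ => y - n) '' S = S := by
      ext z
      constructor
      · rintro ⟨y, hy, rfl⟩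
        show Φ (y - n) = 0
        rw [hshift]
        exact hy
      · intro hz
        refine ⟨z + n, ?_, by ring⟩
        show Φ (z + n) = 0
        have h := hshift (z + n) n
        simp only [add_sub_cancel_right] at h
        rw [← h]
        exact hz
    have hiso : Isometry (fun y : ℝ => y - (n : ℝ)) := Isometry.of_dist_eq (by
      intro a b; simp [Real.dist_eq])
    calc Metric.infDist (x - n) S
        = Metric.infDist ((fun y : ℝ => y - n) x) ((fun y : ℝ => y - n) '' S) := by rw [himg]
      _ = Metric.infDist x S := Metric.infDist_image hiso
  -- smoothness facts
  have h2 : ContDiff ℝ (1 + 1) Φ := by norm_num; exact hΦ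
  have hdiff : Differentiable ℝ Φ := (contDiff_succ_iff_deriv.mp h2).1
  have hcd1 : ContDiff ℝ 1 (deriv Φ) := (contDiff_succ_iff_deriv.mp h2).2.2
  have hdiff' : Differentiable ℝ (deriv Φ) := (contDiff_one_iff_deriv.mp hcd1).1
  have hcont'' : Continuous (deriv (deriv Φ)) := (contDiff_one_iff_deriv.mp hcd1).2
  have hcont' : Continuous (deriv Φ) := hdiff'.continuous
  -- periodicity of derivatives
  have hper' : ∀ x, deriv Φ (x + 1) = deriv Φ x := by
    intro x
    have h : deriv (fun y => Φ (y + 1)) x = deriv Φ x := by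
      congr 1; funext y; exact hper y
    rw [← h, deriv_comp_add_const]
  have hper'' : ∀ x, deriv (deriv Φ) (x + 1) = deriv (deriv Φ) x := by
    intro x
    have h : deriv (fun y => deriv Φ (y + 1)) x = deriv (deriv Φ) x := by
      congr 1; funext y; exact hper' y
    rw [← h, deriv_comp_add_const]
  -- the numerator function and its global bound
  have hNper : Function.Periodic
      (fun x => |deriv (deriv Φ) x * Φ x - deriv Φ x * deriv Φ x|) 1 := by
    intro x; simp only [hper x, hper' x, hper'' x]
  have hNcont : Continuous (fun x => |deriv (deriv Φ) x * Φ x - deriv Φ x * deriv Φ x|) :=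
    ((hcont''.mul hcont).sub (hcont'.mul hcont')).abs
  obtain ⟨zmax, _, hzmax'⟩ := IsCompact.exists_isMaxOn (isCompact_Icc (a := (0:ℝ)) (b := 1))
    (⟨0, by norm_num⟩ : (Set.Icc (0:ℝ) 1).Nonempty) hNcont.continuousOn
  have hzmax := isMaxOn_iff.mp hzmax'
  set M : ℝ := |deriv (deriv Φ) zmax * Φ zmax - deriv Φ zmax * deriv Φ zmax| with hMdef
  have hMbound : ∀ x, |deriv (deriv Φ) x * Φ x - deriv Φ x * deriv Φ x| ≤ M := by
    intro x
    have h1 : |deriv (deriv Φ) (x - ⌊x⌋) * Φ (x - ⌊x⌋) - deriv Φ (x - ⌊x⌋) * deriv Φ (x - ⌊x⌋)|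
        = |deriv (deriv Φ) x * Φ x - deriv Φ x * deriv Φ x| := by
      have h := hNper.sub_zsmul_eq (x := x) ⌊x⌋
      simp only [zsmul_eq_mul, mul_one] at h
      exact h
    have hmem : x - ⌊x⌋ ∈ Set.Icc (0:ℝ) 1 :=
      ⟨by simpa using (Int.fract_nonneg x), le_of_lt (by simpa using Int.fract_lt_one x)⟩
    rw [← h1]
    exact hzmax _ hmem
  have hMnonneg : 0 ≤ M := le_trans (abs_nonneg _) (hMbound 0)
  -- KEY: lower bound |Φ x| ≥ c · d(x)
  have key : ∃ c > 0, ∀ x : ℝ, c * Metric.infDist x S ≤ |Φ x| := by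
    by_contra hcon
    push_neg at hcon
    have hcon' : ∀ n : ℕ, ∃ x, |Φ x| < (1 / (n + 1)) * Metric.infDist x S := by
      intro n; exact hcon (1 / (n + 1)) (by positivity)
    choose u hu using hcon'
    set v : ℕ → ℝ := fun n => u n - ⌊u n⌋ with hvdef
    have hv01 : ∀ n, v n ∈ Set.Icc (0:ℝ) 1 := fun n =>
      ⟨by simpa [hvdef] using (Int.fract_nonneg (u n)),
       le_of_lt (by simpa [hvdef] using Int.fract_lt_one (u n))⟩
    have hΦv : ∀ n, Φ (v n) = Φ (u n) := fun n => hshift (u n) ⌊u n⌋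
    have hdv : ∀ n, Metric.infDist (v n) S = Metric.infDist (u n) S :=
      fun n => hd_shift (u n) ⌊u n⌋
    have hv : ∀ n, |Φ (v n)| < (1 / (n + 1)) * Metric.infDist (v n) S := by
      intro n; rw [hΦv, hdv]; exact hu n
    have hdpos : ∀ n, 0 < Metric.infDist (v n) S := by
      intro n
      by_contra h
      push_neg at h
      have h0 : Metric.infDist (v n) S = 0 := le_antisymm h Metric.infDist_nonneg
      have h1 := hv n
      rw [h0, mul_zero] at h1
      exact absurd h1 (not_lt.mpr (abs_nonneg _))
    have hvnotS : ∀ n, v n ∉ S := by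
      intro n hmem
      exact absurd (Metric.infDist_zero_of_mem hmem) (ne_of_gt (hdpos n))
    obtain ⟨w, hwmem, φ, hφmono, hφtend⟩ := isCompact_Icc.tendsto_subseq hv01
    have hs₀' : s₀ - (⌊s₀⌋ : ℤ) ∈ S := by
      show Φ (s₀ - (⌊s₀⌋:ℤ)) = 0
      rw [hshift]; exact hs₀
    have hd1 : ∀ n, Metric.infDist (v n) S ≤ 1 := by
      intro n
      refine le_trans (Metric.infDist_le_dist_of_mem hs₀') ?_
      rw [Real.dist_eq]
      have h1 := (hv01 n).1
      have h2 := (hv01 n).2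
      have h3 : (0:ℝ) ≤ s₀ - ⌊s₀⌋ := by simpa using (Int.fract_nonneg s₀)
      have h4 : s₀ - (⌊s₀⌋:ℝ) < 1 := by simpa using Int.fract_lt_one s₀
      rw [abs_le]
      constructor <;> nlinarith
    have hsmall : ∀ n, |Φ (v n)| ≤ 1 / (n + 1) := by
      intro n
      calc |Φ (v n)| ≤ (1 / (n + 1)) * Metric.infDist (v n) S := (hv n).le
        _ ≤ (1 / (n + 1)) * 1 := mul_le_mul_of_nonneg_left (hd1 n) (by positivity)
        _ = 1 / (n + 1) := by ring
    have hz : Tendsto (fun n : ℕ => 1 / ((n:ℝ) + 1)) atTop (𝓝 0) :=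
      tendsto_one_div_add_atTop_nhds_zero_nat
    have hΦw : Φ w = 0 := by
      have ht : Tendsto (fun n => Φ (v (φ n))) atTop (𝓝 (Φ w)) :=
        (hcont.tendsto w).comp hφtend
      have habs : Tendsto (fun n => |Φ (v (φ n))|) atTop (𝓝 |Φ w|) := ht.abs
      have hle : |Φ w| ≤ 0 := by
        refine le_of_tendsto_of_tendsto habs hz ?_
        filter_upwards with n
        calc |Φ (v (φ n))| ≤ 1 / ((φ n : ℝ) + 1) := hsmall (φ n)
          _ ≤ 1 / ((n:ℝ) + 1) := by
              apply one_div_le_one_div_of_le (by positivity)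
              have hnn : (n:ℝ) ≤ (φ n : ℝ) := by exact_mod_cast hφmono.le_apply
              linarith
      exact abs_eq_zero.mp (le_antisymm hle (abs_nonneg _))
    have hwS : w ∈ S := hΦw
    have hvne : ∀ n, v n ≠ w := fun n h => hvnotS n (h ▸ hwS)
    have hslope : Tendsto (slope Φ w) (𝓝[≠] w) (𝓝 (deriv Φ w)) :=
      hasDerivAt_iff_tendsto_slope.mp (hdiff w).hasDerivAt
    have htendin : Tendsto (fun n => v (φ n)) atTop (𝓝[≠] w) := by
      rw [tendsto_nhdsWithin_iff]
      exact ⟨hφtend, Filter.Eventually.of_forall fun n => hvne (φ n)⟩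
    have hsl : Tendsto (fun n => |slope Φ w (v (φ n))|) atTop (𝓝 |deriv Φ w|) :=
      (hslope.comp htendin).abs
    have hfin : |deriv Φ w| ≤ 0 := by
      refine le_of_tendsto_of_tendsto hsl hz ?_
      filter_upwards with n
      have hne : v (φ n) - w ≠ 0 := sub_ne_zero.mpr (hvne (φ n))
      have hdw : Metric.infDist (v (φ n)) S ≤ |v (φ n) - w| := by
        have h := Metric.infDist_le_dist_of_mem (x := v (φ n)) hwS
        simpa [Real.dist_eq] using h
      have habs : |slope Φ w (v (φ n))| = |Φ (v (φ n))| / |v (φ n) - w| := by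
        rw [slope_def_field, hΦw, sub_zero, abs_div]
      rw [habs, div_le_iff₀ (abs_pos.mpr hne)]
      have h1 : |Φ (v (φ n))| ≤ (1 / ((φ n : ℝ) + 1)) * |v (φ n) - w| :=
        le_trans (hv (φ n)).le (mul_le_mul_of_nonneg_left hdw (by positivity))
      have hh2 : (1 / ((φ n:ℝ) + 1)) ≤ 1 / ((n:ℝ) + 1) := by
        apply one_div_le_one_div_of_le (by positivity)
        have hnn : (n:ℝ) ≤ (φ n : ℝ) := by exact_mod_cast hφmono.le_apply
        linarith
      nlinarith [abs_nonneg (v (φ n) - w)]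
    exact hS' w hΦw (abs_eq_zero.mp (le_antisymm hfin (abs_nonneg _)))
  obtain ⟨c, hcpos, hc⟩ := key
  refine ⟨M / c ^ 2 + 2, by nlinarith [div_nonneg hMnonneg (sq_nonneg c)], 1, ?_⟩
  intro L hL a ha x hx
  have hLpos : (0:ℝ) < L := lt_of_lt_of_le one_pos hL
  have hxS : x ∉ S := hx
  have hdpos : 0 < Metric.infDist x S := (hSclosed.notMem_iff_infDist_pos hSne').mp hxS
  -- compute the second derivative
  have hder1 : ∀ z : ℝ, Φ z ≠ 0 → HasDerivAt (fun z => z + a + L * Real.log |Φ z|)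
      (1 + L * (deriv Φ z / Φ z)) z := by
    intro z hz
    have hlog : HasDerivAt (fun y => Real.log (Φ y)) ((Φ z)⁻¹ * deriv Φ z) z :=
      (Real.hasDerivAt_log hz).comp z (hdiff z).hasDerivAt
    have hlog' : HasDerivAt (fun y => Real.log (Φ y)) (deriv Φ z / Φ z) z := by
      simpa [div_eq_inv_mul] using hlog
    have hfun : (fun y : ℝ => y + a + L * Real.log |Φ y|)
        = fun y => y + a + L * Real.log (Φ y) := by
      funext y; rw [Real.log_abs]
    rw [hfun]
    exact ((hasDerivAt_id' z).add_const a).add (hlog'.const_mul L)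
  have hEq : deriv (fun z => z + a + L * Real.log |Φ z|) =ᶠ[𝓝 x]
      (fun z => 1 + L * (deriv Φ z / Φ z)) := by
    filter_upwards [hSclosed.isOpen_compl.mem_nhds hxS] with z hz
    exact (hder1 z hz).deriv
  rw [hEq.deriv_eq]
  have hder2 : HasDerivAt (fun z => 1 + L * (deriv Φ z / Φ z))
      (L * ((deriv (deriv Φ) x * Φ x - deriv Φ x * deriv Φ x) / Φ x ^ 2)) x := by
    have hdiv : HasDerivAt (fun z => deriv Φ z / Φ z)
        ((deriv (deriv Φ) x * Φ x - deriv Φ x * deriv Φ x) / Φ x ^ 2) x :=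
      (hdiff' x).hasDerivAt.div (hdiff x).hasDerivAt hx
    exact (hdiv.const_mul L).const_add 1
  rw [hder2.deriv]
  -- final estimate
  rw [abs_mul, abs_of_pos hLpos, abs_div, abs_pow, sq_abs]
  have hnum : |deriv (deriv Φ) x * Φ x - deriv Φ x * deriv Φ x| ≤ M := hMbound x
  have hΦ2 : c ^ 2 * Metric.infDist x S ^ 2 ≤ Φ x ^ 2 := by
    have h1 := hc x
    have h2 : 0 ≤ c * Metric.infDist x S := mul_nonneg hcpos.le hdpos.le
    nlinarith [sq_abs (Φ x), abs_nonneg (Φ x)]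
  have hmain : |deriv (deriv Φ) x * Φ x - deriv Φ x * deriv Φ x| / Φ x ^ 2
      ≤ M / (c ^ 2 * Metric.infDist x S ^ 2) :=
    div_le_div₀ hMnonneg hnum (by positivity) hΦ2
  calc L * (|deriv (deriv Φ) x * Φ x - deriv Φ x * deriv Φ x| / Φ x ^ 2)
      ≤ L * (M / (c ^ 2 * Metric.infDist x S ^ 2)) :=
        mul_le_mul_of_nonneg_left hmain hLpos.le
    _ = (M / c ^ 2) * L / Metric.infDist x S ^ 2 := by
        field_simp
    _ ≤ (M / c ^ 2 + 2) * L / Metric.infDist x S ^ 2 := by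
        gcongr
        linarith
end

section
/- Under the same hypotheses on Φ with critical set C and constant K₀ as above, for every ε > 0 and every x outside the ε-neighborhood of C (with Φ(x) ≠ 0), one has |f'(x)| ≥ K₀⁻¹·L·ε, for all sufficiently large L. -/
open Set

lemma mvt_ge {f : ℝ → ℝ} (hd : Differentiable ℝ f) {a b κ : ℝ} (hab : a < b)
    (h : ∀ y ∈ Set.Icc a b, κ ≤ deriv f y) : κ * (b - a) ≤ f b - f a := by
  obtain ⟨c, hc, hceq⟩ := exists_deriv_eq_slope f hab (hd.continuous.continuousOn)
    (hd.differentiableOn)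
  have hc' : κ ≤ (f b - f a) / (b - a) := hceq ▸ h c ⟨hc.1.le, hc.2.le⟩
  have hba : (0:ℝ) < b - a := by linarith
  calc κ * (b - a) ≤ ((f b - f a) / (b - a)) * (b - a) :=
        mul_le_mul_of_nonneg_right hc' hba.le
    _ = f b - f a := by field_simp

lemma zero_near_pos {ψ : ℝ → ℝ} (hd : Differentiable ℝ ψ)
    {x r κ : ℝ} (hr : 0 < r) (hκ : 0 < κ)
    (hbig : ∀ y ∈ Set.Icc (x - r) (x + r), κ ≤ deriv ψ y)
    (hsmall : |ψ x| < κ * r) :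
    ∃ y, ψ y = 0 ∧ κ * |y - x| ≤ |ψ x| := by
  have habs := abs_lt.mp hsmall
  have h1 : κ * (x + r - x) ≤ ψ (x + r) - ψ x :=
    mvt_ge hd (by linarith) (fun y hy => hbig y ⟨by linarith [hy.1], hy.2⟩)
  have h2 : κ * (x - (x - r)) ≤ ψ x - ψ (x - r) :=
    mvt_ge hd (by linarith) (fun y hy => hbig y ⟨hy.1, by linarith [hy.2]⟩)
  have hpos : 0 < ψ (x + r) := by
    have : κ * r ≤ ψ (x + r) - ψ x := by linarith [h1]
    linarith
  have hneg : ψ (x - r) < 0 := by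
    have : κ * r ≤ ψ x - ψ (x - r) := by linarith [h2]
    linarith
  have hmem : (0:ℝ) ∈ Icc (ψ (x - r)) (ψ (x + r)) := ⟨hneg.le, hpos.le⟩
  obtain ⟨y, hy, hyz⟩ := intermediate_value_Icc (by linarith : x - r ≤ x + r)
    hd.continuous.continuousOn hmem
  refine ⟨y, hyz, ?_⟩
  rcases lt_trichotomy y x with h | h | h
  · have h3 : κ * (x - y) ≤ ψ x - ψ y :=
      mvt_ge hd h (fun z hz => hbig z ⟨le_trans hy.1 hz.1, le_trans hz.2 (by linarith)⟩)
    rw [hyz, sub_zero] at h3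
    have heq : |y - x| = x - y := by rw [abs_sub_comm]; exact abs_of_nonneg (by linarith)
    rw [heq]
    exact h3.trans (le_abs_self _)
  · simp [h]
  · have h3 : κ * (y - x) ≤ ψ y - ψ x :=
      mvt_ge hd h (fun z hz => hbig z ⟨le_trans (by linarith : x - r ≤ x) hz.1, le_trans hz.2 hy.2⟩)
    rw [hyz, zero_sub] at h3
    have heq : |y - x| = y - x := abs_of_nonneg (by linarith)
    rw [heq]
    exact (by linarith [h3] : κ * (y - x) ≤ -ψ x).trans (neg_le_abs _)

lemma zero_near {ψ : ℝ → ℝ} (hd : Differentiable ℝ ψ) (hc : Continuous (deriv ψ))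
    {x r κ : ℝ} (hr : 0 < r) (hκ : 0 < κ)
    (hbig : ∀ y ∈ Set.Icc (x - r) (x + r), κ ≤ |deriv ψ y|)
    (hsmall : |ψ x| < κ * r) :
    ∃ y, ψ y = 0 ∧ κ * |y - x| ≤ |ψ x| := by
  by_cases hall : ∀ y ∈ Set.Icc (x - r) (x + r), κ ≤ deriv ψ y
  · exact zero_near_pos hd hr hκ hall hsmall
  · push_neg at hall
    obtain ⟨a, ha, haκ⟩ := hall
    have haneg : deriv ψ a ≤ -κ := by
      rcases le_abs'.mp (hbig a ha) with h | h
      · exact h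
      · linarith
    have hallneg : ∀ y ∈ Set.Icc (x - r) (x + r), deriv ψ y ≤ -κ := by
      intro b hb
      by_contra hbpos
      push_neg at hbpos
      have hbκ : κ ≤ deriv ψ b := by
        rcases le_abs'.mp (hbig b hb) with h | h
        · linarith
        · exact h
      have h0 : (0:ℝ) ∈ Set.uIcc (deriv ψ a) (deriv ψ b) := by
        rw [Set.mem_uIcc]; left; constructor <;> linarith
      obtain ⟨z, hz, hz0⟩ := intermediate_value_uIcc (hc.continuousOn) h0
      have hzI : z ∈ Set.Icc (x - r) (x + r) := Set.uIcc_subset_Icc ha hb hz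
      have := hbig z hzI
      rw [hz0] at this; simp at this; linarith
    have hdneg : Differentiable ℝ (fun t => -ψ t) := hd.neg
    have hderiv : ∀ y, deriv (fun t => -ψ t) y = -deriv ψ y := fun y => deriv.neg
    obtain ⟨y, hy0, hyb⟩ := zero_near_pos hdneg hr hκ
      (fun y hy => by rw [hderiv]; linarith [hallneg y hy])
      (by simpa using hsmall)
    exact ⟨y, by simpa using hy0, by simpa using hyb⟩

set_option maxHeartbeats 1000000 in
/-- |f'(x)| ≥ K₀⁻¹·L·ε outside the ε-neighborhood of the critical set. -/
theorem stmt3 (Φ : ℝ → ℝ) (hΦ : ContDiff ℝ 2 Φ)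
    (hper : ∀ x, Φ (x + 1) = Φ x)
    (hS' : ∀ x, Φ x = 0 → deriv Φ x ≠ 0)
    (hC' : ∀ x, deriv Φ x = 0 → deriv (deriv Φ) x ≠ 0)
    (hSne : ∃ x, Φ x = 0) :
    ∃ K₀ : ℝ, 1 < K₀ ∧ ∃ L₀ : ℝ, ∀ L : ℝ, L ≥ L₀ →
      ∀ a ∈ Set.Icc (0:ℝ) 1, ∀ ε : ℝ, 0 < ε → ∀ x : ℝ, Φ x ≠ 0 →
      Metric.infDist x {y : ℝ | deriv (fun z => z + a + L * Real.log |Φ z|) y = 0} ≥ ε →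
      |deriv (fun z => z + a + L * Real.log |Φ z|) x| ≥ K₀⁻¹ * L * ε := by
  classical
  -- regularity facts
  have hΦdiff : Differentiable ℝ Φ := hΦ.differentiable two_ne_zero
  have h1 : ContDiff ℝ 1 (deriv Φ) := by
    have h2 : ContDiff ℝ ((1:ℕ) + 1 : ℕ) Φ := hΦ
    rw [show (((1:ℕ) + 1 : ℕ) : WithTop ℕ∞) = (1 : WithTop ℕ∞) + 1 by norm_cast] at h2
    exact (contDiff_succ_iff_deriv.mp h2).2.2
  have hΦ'diff : Differentiable ℝ (deriv Φ) := h1.differentiable one_ne_zero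
  have hΦ''cont : Continuous (deriv (deriv Φ)) := (contDiff_one_iff_deriv.mp h1).2
  have hΦ'cont : Continuous (deriv Φ) := hΦ'diff.continuous
  have hΦcont : Continuous Φ := hΦdiff.continuous
  -- periodicity of derivatives
  have hfun1 : (fun y => Φ (y + 1)) = Φ := funext hper
  have hper' : ∀ y, deriv Φ (y + 1) = deriv Φ y := by
    intro y
    rw [← deriv_comp_add_const (f := Φ) (a := 1), hfun1]
  have hfun2 : (fun y => deriv Φ (y + 1)) = deriv Φ := funext hper'
  have hper'' : ∀ y, deriv (deriv Φ) (y + 1) = deriv (deriv Φ) y := by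
    intro y
    rw [← deriv_comp_add_const (f := deriv Φ) (a := 1), hfun2]
  -- global bound B
  obtain ⟨B, hB1, hBΦ, hBΦ', hBΦ''⟩ :
      ∃ B : ℝ, 1 ≤ B ∧ (∀ y, |Φ y| ≤ B) ∧ (∀ y, |deriv Φ y| ≤ B) ∧
        (∀ y, |deriv (deriv Φ) y| ≤ B) := by
    set G : ℝ → ℝ := fun y => |Φ y| + |deriv Φ y| + |deriv (deriv Φ) y| with hG
    have hGc : Continuous G := ((hΦcont.abs.add hΦ'cont.abs).add hΦ''cont.abs)
    have hGper : Function.Periodic G 1 := fun y => by simp only [hG, hper, hper', hper'']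
    obtain ⟨m, _, hm⟩ := isCompact_Icc.exists_isMaxOn (nonempty_Icc.mpr zero_le_one)
      hGc.continuousOn
    have hGb : ∀ y, G y ≤ G m := by
      intro y
      obtain ⟨y', hy', hyeq⟩ := hGper.exists_mem_Ico₀ one_pos y
      rw [hyeq]
      exact hm ⟨hy'.1, hy'.2.le⟩
    refine ⟨max 1 (G m), le_max_left _ _, fun y => ?_, fun y => ?_, fun y => ?_⟩ <;>
    · refine le_trans ?_ (le_trans (hGb y) (le_max_right _ _))
      have n1 := abs_nonneg (Φ y)
      have n2 := abs_nonneg (deriv Φ y)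
      have n3 := abs_nonneg (deriv (deriv Φ) y)
      simp only [hG]
      linarith
  have hB0 : (0:ℝ) < B := lt_of_lt_of_le one_pos hB1
  -- nondegeneracy lower bound μ
  obtain ⟨μ, hμ0, hμ⟩ : ∃ μ : ℝ, 0 < μ ∧ ∀ y, μ ≤ |deriv Φ y| + |deriv (deriv Φ) y| := by
    set H : ℝ → ℝ := fun y => |deriv Φ y| + |deriv (deriv Φ) y| with hH
    have hHc : Continuous H := hΦ'cont.abs.add hΦ''cont.abs
    have hHper : Function.Periodic H 1 := fun y => by simp only [hH, hper', hper'']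
    obtain ⟨m, _, hm⟩ := isCompact_Icc.exists_isMinOn (nonempty_Icc.mpr zero_le_one)
      hHc.continuousOn
    have hHpos : 0 < H m := by
      rcases eq_or_ne (deriv Φ m) 0 with h | h
      · have := hC' m h
        simp only [hH, h, abs_zero, zero_add]
        positivity
      · have h1 : 0 < |deriv Φ m| := abs_pos.mpr h
        have h2 : 0 ≤ |deriv (deriv Φ) m| := abs_nonneg _
        simp only [hH]; linarith
    refine ⟨H m, hHpos, fun y => ?_⟩
    obtain ⟨y', hy', hyeq⟩ := hHper.exists_mem_Ico₀ one_pos y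
    calc H m ≤ H y' := hm ⟨hy'.1, hy'.2.le⟩
      _ = H y := hyeq.symm
  -- the constants
  set δ : ℝ := μ / 2 with hδdef
  set κ : ℝ := μ / 4 with hκdef
  have hδ0 : 0 < δ := by positivity
  have hκ0 : 0 < κ := by positivity
  have hδB : δ ≤ B := by
    have := hμ 0
    have := hBΦ' 0
    have := hBΦ'' 0
    simp only [hδdef]; linarith
  have hκB : κ ≤ B := by simp only [hκdef, hδdef] at *; linarith
  set c : ℝ := κ * δ / (8 * B) with hcdef
  have hc0 : 0 < c := by positivity
  have hcδ : c ≤ δ / 8 := by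
    rw [hcdef, div_le_div_iff₀ (by positivity) (by norm_num)]
    nlinarith
  have hcκ : c ≤ κ / 8 := by
    rw [hcdef, div_le_div_iff₀ (by positivity) (by norm_num)]
    nlinarith
  refine ⟨2 + B / c, by nlinarith [div_pos hB0 hc0], max 1 (4 * B / δ), ?_⟩
  intro L hL a _ha ε hε x hΦx hdist
  have hL1 : (1:ℝ) ≤ L := le_trans (le_max_left _ _) hL
  have hL0 : 0 < L := lt_of_lt_of_le one_pos hL1
  have hBL : B / L ≤ δ / 4 := by
    have h4 : 4 * B / δ ≤ L := le_trans (le_max_right _ _) hL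
    have h5 : 4 * B ≤ L * δ := (div_le_iff₀ hδ0).mp h4
    rw [div_le_div_iff₀ hL0 (by norm_num)]
    linarith
  set ψ : ℝ → ℝ := fun y => deriv Φ y + Φ y / L with hψdef
  have hψdiff : Differentiable ℝ ψ := hΦ'diff.add (hΦdiff.div_const L)
  have hψcont : Continuous ψ := hψdiff.continuous
  have hψderiv : ∀ y, deriv ψ y = deriv (deriv Φ) y + deriv Φ y / L := by
    intro y
    simp only [hψdef]
    rw [deriv_fun_add (hΦ'diff y) ((hΦdiff y).div_const L), deriv_div_const]
  have hψ'cont : Continuous (deriv ψ) := by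
    have heq : deriv ψ = fun y => deriv (deriv Φ) y + deriv Φ y / L := funext hψderiv
    rw [heq]; exact hΦ''cont.add (hΦ'cont.div_const L)
  have hψper : Function.Periodic ψ 1 := fun y => by simp only [hψdef, hper y, hper' y]
  set S := {y : ℝ | deriv (fun z => z + a + L * Real.log |Φ z|) y = 0} with hSdef
  have hderivf : ∀ y, Φ y ≠ 0 →
      deriv (fun z => z + a + L * Real.log |Φ z|) y = L * ψ y / Φ y := by
    intro y hy
    have hlog : HasDerivAt (fun z => Real.log (Φ z)) (deriv Φ y / Φ y) y :=
      (hΦdiff y).hasDerivAt.log hy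
    have heqfun : (fun z => z + a + L * Real.log |Φ z|)
        = (fun z => z + a + L * Real.log (Φ z)) := by
      funext z; rw [Real.log_abs]
    have hD : HasDerivAt (fun z => z + a + L * Real.log (Φ z))
        (1 + L * (deriv Φ y / Φ y)) y :=
      ((hasDerivAt_id y).add_const a).add (hlog.const_mul L)
    rw [heqfun, hD.deriv]
    simp only [hψdef]
    field_simp
    ring
  have hzeroS : ∀ y, ψ y = 0 → y ∈ S := by
    intro y hy
    have hΦy : Φ y ≠ 0 := by
      intro h0
      have h1 : deriv Φ y = 0 := by
        have h2 := hy
        simp only [hψdef, h0, zero_div, add_zero] at h2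
        exact h2
      exact hS' y h0 h1
    show deriv _ y = 0
    rw [hderivf y hΦy, hy, mul_zero, zero_div]
  -- Φ takes positive and negative values
  obtain ⟨x₀, hx₀⟩ := hSne
  have hposval : ∃ u, 0 < Φ u := by
    by_contra h
    push_neg at h
    have hmax : IsLocalMax Φ x₀ :=
      Filter.Eventually.of_forall fun y => by rw [hx₀]; exact h y
    exact hS' x₀ hx₀ hmax.deriv_eq_zero
  have hnegval : ∃ v, Φ v < 0 := by
    by_contra h
    push_neg at h
    have hmin : IsLocalMin Φ x₀ :=
      Filter.Eventually.of_forall fun y => by rw [hx₀]; exact h y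
    exact hS' x₀ hx₀ hmin.deriv_eq_zero
  obtain ⟨u, hu⟩ := hposval
  obtain ⟨v, hv⟩ := hnegval
  have hperΦ : Function.Periodic Φ 1 := fun y => hper y
  -- global max of Φ
  have hglobmax : ∃ m, ∀ y, Φ y ≤ Φ m := by
    obtain ⟨m, _, hm⟩ := isCompact_Icc.exists_isMaxOn (nonempty_Icc.mpr zero_le_one)
      hΦcont.continuousOn
    refine ⟨m, fun y => ?_⟩
    obtain ⟨y', hy', hyeq⟩ := hperΦ.exists_mem_Ico₀ one_pos y
    rw [hyeq]
    exact hm ⟨hy'.1, hy'.2.le⟩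
  have hglobmin : ∃ m, ∀ y, Φ m ≤ Φ y := by
    obtain ⟨m, _, hm⟩ := isCompact_Icc.exists_isMinOn (nonempty_Icc.mpr zero_le_one)
      hΦcont.continuousOn
    refine ⟨m, fun y => ?_⟩
    obtain ⟨y', hy', hyeq⟩ := hperΦ.exists_mem_Ico₀ one_pos y
    rw [hyeq]
    exact hm ⟨hy'.1, hy'.2.le⟩
  obtain ⟨m, hm⟩ := hglobmax
  obtain ⟨m', hm'⟩ := hglobmin
  have hdm : deriv Φ m = 0 := by
    have hmx : IsLocalMax Φ m := Filter.Eventually.of_forall fun y => hm y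
    exact hmx.deriv_eq_zero
  have hdm' : deriv Φ m' = 0 := by
    have hmx : IsLocalMin Φ m' := Filter.Eventually.of_forall fun y => hm' y
    exact hmx.deriv_eq_zero
  have hψm : 0 < ψ m := by
    simp only [hψdef, hdm, zero_add]
    exact div_pos (lt_of_lt_of_le hu (hm u)) hL0
  have hψm' : ψ m' < 0 := by
    simp only [hψdef, hdm', zero_add]
    exact div_neg_of_neg_of_pos (lt_of_le_of_lt (hm' v) hv) hL0
  have h0mem : (0:ℝ) ∈ Set.uIcc (ψ m') (ψ m) := by
    rw [Set.mem_uIcc]; left; exact ⟨hψm'.le, hψm.le⟩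
  obtain ⟨z, _, hz0⟩ := intermediate_value_uIcc hψcont.continuousOn h0mem
  -- a zero of ψ within distance 1 of x, hence ε ≤ 1
  have hznear : ∃ w, ψ w = 0 ∧ |x - w| ≤ 1 := by
    refine ⟨z + (⌊x - z⌋ : ℤ), ?_, ?_⟩
    · have h6 := hψper.sub_int_mul_eq (x := z + (⌊x - z⌋ : ℤ)) ⌊x - z⌋
      simp only [mul_one, add_sub_cancel_right] at h6
      exact h6.symm.trans hz0
    · have h7 : x - (z + (⌊x - z⌋ : ℤ)) = Int.fract (x - z) := by
        rw [Int.fract]; ring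
      rw [h7, abs_of_nonneg (Int.fract_nonneg _)]
      exact (Int.fract_lt_one _).le
  obtain ⟨w, hw0, hwx⟩ := hznear
  have hε1 : ε ≤ 1 := by
    have h1 : Metric.infDist x S ≤ dist x w := Metric.infDist_le_dist_of_mem (hzeroS w hw0)
    rw [Real.dist_eq] at h1
    linarith [hdist]
  -- core estimate : c * ε ≤ |ψ x|
  have hkey : c * ε ≤ |ψ x| := by
    by_contra hlt
    push_neg at hlt
    set r : ℝ := min ε (δ / (4 * B)) with hrdef
    have hr0 : 0 < r := lt_min hε (by positivity)
    have hΦ'x : |deriv Φ x| ≤ δ / 2 := by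
      have h1 : |ψ x| < c := lt_of_lt_of_le hlt (by nlinarith)
      have h2 : |Φ x / L| ≤ B / L := by
        rw [abs_div, abs_of_pos hL0]
        gcongr
        exact hBΦ x
      have h3 : deriv Φ x = ψ x - Φ x / L := by simp only [hψdef]; ring
      calc |deriv Φ x| = |ψ x - Φ x / L| := by rw [h3]
        _ ≤ |ψ x| + |Φ x / L| := abs_sub _ _
        _ ≤ c + δ / 4 := by linarith [hBL]
        _ ≤ δ / 8 + δ / 4 := by linarith [hcδ]
        _ ≤ δ / 2 := by linarith
    have hbig : ∀ y ∈ Set.Icc (x - r) (x + r), κ ≤ |deriv ψ y| := by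
      intro y hy
      have hyx : |y - x| ≤ r := by
        rw [abs_le]; exact ⟨by linarith [hy.1], by linarith [hy.2]⟩
      have hlip : |deriv Φ y - deriv Φ x| ≤ B * |y - x| := by
        have h8 := convex_univ.norm_image_sub_le_of_norm_deriv_le
          (f := deriv Φ) (fun z _ => hΦ'diff z)
          (fun z _ => by rw [Real.norm_eq_abs]; exact hBΦ'' z)
          (Set.mem_univ x) (Set.mem_univ y)
        simpa [Real.norm_eq_abs] using h8
      have hrB : B * r ≤ δ / 4 := by
        have h9 : r ≤ δ / (4 * B) := min_le_right _ _
        calc B * r ≤ B * (δ / (4 * B)) := by gcongr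
          _ = δ / 4 := by field_simp
      have h4 : |deriv Φ y| ≤ δ := by
        have h10 : B * |y - x| ≤ B * r := by gcongr
        calc |deriv Φ y| = |deriv Φ x + (deriv Φ y - deriv Φ x)| := by ring_nf
          _ ≤ |deriv Φ x| + |deriv Φ y - deriv Φ x| := abs_add_le _ _
          _ ≤ δ / 2 + δ / 4 := by linarith
          _ ≤ δ := by linarith
      have h5 : 2 * κ ≤ |deriv (deriv Φ) y| := by
        have h11 := hμ y
        simp only [hκdef, hδdef] at h4 ⊢
        linarith
      have h6 : |deriv Φ y / L| ≤ δ / 4 := by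
        rw [abs_div, abs_of_pos hL0]
        calc |deriv Φ y| / L ≤ B / L := by gcongr; exact hBΦ' y
          _ ≤ δ / 4 := hBL
      rw [hψderiv y]
      have h12 : |deriv (deriv Φ) y| - |deriv Φ y / L|
          ≤ |deriv (deriv Φ) y + deriv Φ y / L| := by
        have := abs_sub_abs_le_abs_sub (deriv (deriv Φ) y) (-(deriv Φ y / L))
        simp only [abs_neg, sub_neg_eq_add] at this
        exact this
      have hκδ : δ / 4 ≤ κ := by simp only [hκdef, hδdef]; linarith [hμ0]
      linarith
    have hsmall : |ψ x| < κ * r := by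
      rcases min_choice ε (δ / (4 * B)) with hmin | hmin
      · rw [hrdef, hmin]
        calc |ψ x| < c * ε := hlt
          _ ≤ (κ / 8) * ε := by gcongr
          _ < κ * ε := by nlinarith
      · rw [hrdef, hmin]
        have h13 : c * ε ≤ c := by nlinarith
        have hhalf : κ * (δ / (4 * B)) = 2 * c := by rw [hcdef]; field_simp; ring
        calc |ψ x| < c := lt_of_lt_of_le hlt h13
          _ < κ * (δ / (4 * B)) := by rw [hhalf]; linarith
    obtain ⟨y, hy0, hyb⟩ := zero_near hψdiff hψ'cont hr0 hκ0 hbig hsmall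
    have hclose : |y - x| < ε := by
      have h14 : κ * |y - x| < c * ε := lt_of_le_of_lt hyb hlt
      have h16 : c * ε ≤ (κ / 8) * ε := mul_le_mul_of_nonneg_right hcκ hε.le
      nlinarith [abs_nonneg (y - x), mul_pos hκ0 hε]
    have h15 : Metric.infDist x S ≤ dist x y := Metric.infDist_le_dist_of_mem (hzeroS y hy0)
    rw [Real.dist_eq, abs_sub_comm] at h15
    linarith [hdist]
  -- conclusion
  rw [ge_iff_le, hderivf x hΦx]
  have hΦxB : |Φ x| ≤ B := hBΦ x
  have hΦx0 : 0 < |Φ x| := abs_pos.mpr hΦx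
  have habs : |L * ψ x / Φ x| = L * |ψ x| / |Φ x| := by
    rw [abs_div, abs_mul, abs_of_pos hL0]
  rw [habs]
  have hKinv : (2 + B / c)⁻¹ ≤ c / B := by
    have h7 : B / c ≤ 2 + B / c := by linarith
    have h8 := inv_anti₀ (div_pos hB0 hc0) h7
    rwa [inv_div] at h8
  calc (2 + B / c)⁻¹ * L * ε ≤ (c / B) * L * ε := by
        gcongr
      _ = L * (c * ε) / B := by ring
      _ ≤ L * |ψ x| / B := by gcongr
      _ ≤ L * |ψ x| / |Φ x| := by
        gcongr
end

section
/- Let L > 1, λ, α ∈ (0,1), and let N be large enough that (1/(αN))·(log 2 + 2) ≤ λα/400 (say). Then for all n sufficiently large, Σ_{q=1}^{⌊2n/(αN)⌋} Σ_{R > λαn/20} M^q · C(n,q) · C(R+q, q) · L^{-R/3} ≤ L^{-λαn/100}, where M is a fixed positive integer and C(·,·) denotes binomial coefficients, provided L is sufficiently large depending on N, M, λ, α. -/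
lemma aux_choose_le_two_pow (n k : ℕ) : n.choose k ≤ 2 ^ n := by
  rcases le_or_gt k n with h | h
  · calc n.choose k ≤ ∑ i ∈ Finset.range (n + 1), n.choose i :=
        Finset.single_le_sum (fun i _ => Nat.zero_le _)
          (Finset.mem_range.2 (Nat.lt_succ_of_le h))
    _ = 2 ^ n := Nat.sum_range_choose n
  · rw [Nat.choose_eq_zero_of_lt h]; exact Nat.zero_le _

set_option maxHeartbeats 1000000 in
/-- the final counting estimate bounding the measure of excluded parameters. -/
theorem stmt10 (lam alp : ℝ) (hlam : lam ∈ Set.Ioo (0:ℝ) 1) (halp : alp ∈ Set.Ioo (0:ℝ) 1)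
    (M : ℕ) (hM : 0 < M) (N : ℕ) (hN0 : 0 < N)
    (hN : (1 / (alp * N)) * (Real.log 2 + 2) ≤ lam * alp / 400) :
    ∃ L₀ : ℝ, ∀ L : ℝ, L ≥ L₀ → ∃ n₀ : ℕ, ∀ n : ℕ, n ≥ n₀ →
      ∑ q ∈ Finset.Icc 1 (Nat.floor (2 * (n : ℝ) / (alp * N))),
        ∑' R : ℕ, (if lam * alp * n / 20 < (R : ℝ) then
            (M : ℝ) ^ q * (n.choose q : ℝ) * (((R + q).choose q : ℝ)) * L ^ (-(R : ℝ) / 3)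
          else 0)
      ≤ L ^ (-(lam * alp * n / 100)) := by
  obtain ⟨hlam0, hlam1⟩ := hlam
  obtain ⟨halp0, halp1⟩ := halp
  set ε := lam * alp with hε
  have hε0 : 0 < ε := mul_pos hlam0 halp0
  have hN0' : (0:ℝ) < (N:ℝ) := by exact_mod_cast hN0
  have haN : (0:ℝ) < alp * N := mul_pos halp0 hN0'
  have hM1 : (1:ℝ) ≤ (M:ℝ) := by exact_mod_cast hM
  have h2M1 : (1:ℝ) ≤ 2 * (M:ℝ) := by linarith
  have h2M0 : (0:ℝ) < 2 * (M:ℝ) := by linarith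
  set K : ℝ := 2 / (alp * N) * Real.log (2 * M) + Real.log 2 with hK
  have hK0 : 0 ≤ K := by
    have h1 : 0 ≤ Real.log (2 * M) := Real.log_nonneg (by linarith)
    have h2 : 0 ≤ Real.log 2 := Real.log_nonneg (by norm_num)
    have : 0 ≤ 2 / (alp * N) := by positivity
    positivity
  refine ⟨max ((2:ℝ) ^ (24:ℕ)) (Real.exp (400 / ε * (K + 1))), fun L hL => ?_⟩
  have hL2 : (2:ℝ) ^ (24:ℕ) ≤ L := le_trans (le_max_left _ _) hL
  have hL1 : (1:ℝ) ≤ L := le_trans (by norm_num) hL2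
  have hL0 : (0:ℝ) < L := lt_of_lt_of_le one_pos hL1
  have hlogL : 400 / ε * (K + 1) ≤ Real.log L := by
    have := le_trans (le_max_right ((2:ℝ) ^ (24:ℕ)) _) hL
    calc 400 / ε * (K + 1) = Real.log (Real.exp (400 / ε * (K + 1))) :=
          (Real.log_exp _).symm
      _ ≤ Real.log L := Real.log_le_log (Real.exp_pos _) this
  refine ⟨max 1 (Nat.ceil (16 / (alp * N))), fun n hn => ?_⟩
  have hn1 : 1 ≤ n := le_trans (le_max_left _ _) hn
  have hn1' : (1:ℝ) ≤ (n:ℝ) := by exact_mod_cast hn1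
  have hn0' : (0:ℝ) ≤ (n:ℝ) := by linarith
  have hn16 : 16 / (alp * N) ≤ (n:ℝ) := by
    have h := le_trans (le_max_right 1 (Nat.ceil (16 / (alp * N)))) hn
    calc 16 / (alp * N) ≤ (Nat.ceil (16 / (alp * N)) : ℝ) := Nat.le_ceil _
      _ ≤ (n:ℝ) := by exact_mod_cast h
  set Q := Nat.floor (2 * (n : ℝ) / (alp * N)) with hQdef
  have hQle : (Q:ℝ) ≤ 2 * (n:ℝ) / (alp * N) := Nat.floor_le (by positivity)
  set u := L ^ (-(1:ℝ) / 24) with hu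
  have hu0 : 0 ≤ u := Real.rpow_nonneg hL0.le _
  have hL24 : (2:ℝ) ≤ L ^ ((1:ℝ) / 24) := by
    calc (2:ℝ) = ((2:ℝ) ^ (24:ℕ)) ^ ((1:ℝ) / 24) := by
          rw [← Real.rpow_natCast 2 24, ← Real.rpow_mul (by norm_num)]; norm_num
      _ ≤ L ^ ((1:ℝ) / 24) := Real.rpow_le_rpow (by positivity) hL2 (by norm_num)
  have hu_eq : u = (L ^ ((1:ℝ) / 24))⁻¹ := by
    rw [hu, ← Real.rpow_neg hL0.le]; norm_num
  have hu_half : u ≤ 1 / 2 := by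
    rw [hu_eq]
    have h0 : (0:ℝ) < L ^ ((1:ℝ) / 24) := lt_of_lt_of_le two_pos hL24
    have := inv_anti₀ two_pos hL24
    simpa [one_div] using this
  have hu1 : u < 1 := lt_of_le_of_lt hu_half (by norm_num)
  set C : ℝ := (2 * (M:ℝ)) ^ Q * 2 ^ n * L ^ (-(ε * n / 80)) with hCdef
  have hC0 : 0 ≤ C := by positivity
  -- pointwise bound on terms
  have hterm : ∀ q ∈ Finset.Icc 1 Q, ∀ R : ℕ,
      (if ε * n / 20 < (R : ℝ) then
        (M : ℝ) ^ q * (n.choose q : ℝ) * (((R + q).choose q : ℝ)) * L ^ (-(R : ℝ) / 3)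
      else 0) ≤ C * u ^ R := by
    intro q hq R
    obtain ⟨hq1, hqQ⟩ := Finset.mem_Icc.1 hq
    split_ifs with hR
    · have huR : L ^ (-(R:ℝ) / 24) = u ^ R := by
        rw [hu, ← Real.rpow_natCast (L ^ (-(1:ℝ) / 24)) R, ← Real.rpow_mul hL0.le]
        congr 1; ring
      have hsplit : L ^ (-(R:ℝ) / 3) =
          L ^ (-(R:ℝ) / 24) * L ^ (-(R:ℝ) / 24) * L ^ (-(R:ℝ) / 4) := by
        rw [← Real.rpow_add hL0, ← Real.rpow_add hL0]
        congr 1; ring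
      have hch1 : (n.choose q : ℝ) ≤ 2 ^ n := by
        exact_mod_cast Nat.cast_le.2 (aux_choose_le_two_pow n q)
      have hch2 : (((R + q).choose q : ℝ)) ≤ 2 ^ (R + q) := by
        exact_mod_cast Nat.cast_le.2 (aux_choose_le_two_pow (R + q) q)
      have htail : L ^ (-(R:ℝ) / 4) ≤ L ^ (-(ε * n / 80)) := by
        apply Real.rpow_le_rpow_of_exponent_le hL1
        have : ε * n / 20 ≤ (R:ℝ) := hR.le
        linarith
      have h2u : (2 * u) ^ R ≤ 1 := pow_le_one₀ (by positivity) (by linarith)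
      calc (M : ℝ) ^ q * (n.choose q : ℝ) * (((R + q).choose q : ℝ)) * L ^ (-(R : ℝ) / 3)
          ≤ (M : ℝ) ^ q * 2 ^ n * 2 ^ (R + q) * L ^ (-(R : ℝ) / 3) := by
            have hLp : (0:ℝ) ≤ L ^ (-(R:ℝ) / 3) := Real.rpow_nonneg hL0.le _
            gcongr <;> positivity
        _ = (2 * (M:ℝ)) ^ q * 2 ^ n * (2 ^ R * L ^ (-(R : ℝ) / 3)) := by
            rw [pow_add]; ring
        _ ≤ (2 * (M:ℝ)) ^ Q * 2 ^ n * (2 ^ R * L ^ (-(R : ℝ) / 3)) := by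
            have : (2 * (M:ℝ)) ^ q ≤ (2 * (M:ℝ)) ^ Q := pow_le_pow_right₀ h2M1 hqQ
            have hLp : (0:ℝ) ≤ L ^ (-(R:ℝ) / 3) := Real.rpow_nonneg hL0.le _
            gcongr
        _ = (2 * (M:ℝ)) ^ Q * 2 ^ n * ((2 * u) ^ R * u ^ R * L ^ (-(R : ℝ) / 4)) := by
            rw [hsplit, huR, mul_pow]; ring
        _ ≤ (2 * (M:ℝ)) ^ Q * 2 ^ n * (1 * u ^ R * L ^ (-(ε * n / 80))) := by
            have hLp : (0:ℝ) ≤ L ^ (-(R:ℝ) / 4) := Real.rpow_nonneg hL0.le _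
            gcongr
        _ = C * u ^ R := by rw [hCdef]; ring
    · positivity
  have hgsum : Summable (fun R : ℕ => C * u ^ R) :=
    (summable_geometric_of_lt_one hu0 hu1).mul_left C
  have hsum_q : ∀ q ∈ Finset.Icc 1 Q,
      (∑' R : ℕ, (if ε * n / 20 < (R : ℝ) then
        (M : ℝ) ^ q * (n.choose q : ℝ) * (((R + q).choose q : ℝ)) * L ^ (-(R : ℝ) / 3)
      else 0)) ≤ 2 * C := by
    intro q hq
    have hfnn : ∀ R : ℕ, 0 ≤ (if ε * n / 20 < (R : ℝ) then
        (M : ℝ) ^ q * (n.choose q : ℝ) * (((R + q).choose q : ℝ)) * L ^ (-(R : ℝ) / 3)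
      else 0) := by
      intro R; split_ifs
      · have : (0:ℝ) ≤ L ^ (-(R:ℝ) / 3) := Real.rpow_nonneg hL0.le _
        positivity
      · exact le_rfl
    have hfsum : Summable (fun R : ℕ => (if ε * n / 20 < (R : ℝ) then
        (M : ℝ) ^ q * (n.choose q : ℝ) * (((R + q).choose q : ℝ)) * L ^ (-(R : ℝ) / 3)
      else 0)) := Summable.of_nonneg_of_le hfnn (hterm q hq) hgsum
    calc (∑' R : ℕ, (if ε * n / 20 < (R : ℝ) then
          (M : ℝ) ^ q * (n.choose q : ℝ) * (((R + q).choose q : ℝ)) * L ^ (-(R : ℝ) / 3)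
        else 0))
        ≤ ∑' R : ℕ, C * u ^ R := Summable.tsum_le_tsum (hterm q hq) hfsum hgsum
      _ = C * (1 - u)⁻¹ := by rw [tsum_mul_left, tsum_geometric_of_lt_one hu0 hu1]
      _ ≤ C * 2 := by
          have h12 : (1 - u)⁻¹ ≤ 2 := by
            have h1 : (0:ℝ) < 1/2 := by norm_num
            have h2 : (1:ℝ)/2 ≤ 1 - u := by linarith
            have := inv_anti₀ h1 h2
            simpa using this
          exact mul_le_mul_of_nonneg_left h12 hC0
      _ = 2 * C := by ring
  -- main chain
  have hmain : (Q:ℝ) * (2 * C) ≤ L ^ (-(ε * n / 100)) := by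
    -- exponential bounds
    have hA : 2 * (Q:ℝ) ≤ Real.exp n := by
      have h1 : 2 * (Q:ℝ) ≤ 4 / (alp * N) * n := by
        rw [div_mul_eq_mul_div, le_div_iff₀ haN]
        calc 2 * (Q:ℝ) * (alp * N) ≤ 2 * (2 * n / (alp * N)) * (alp * N) := by
              gcongr
          _ = 4 * n := by field_simp; ring
      have h2 : 4 / (alp * N) ≤ (n:ℝ) / 4 := by
        rw [div_le_div_iff₀ haN (by norm_num : (0:ℝ) < 4)]
        have h16 : (16:ℝ) ≤ (n:ℝ) * (alp * N) := (div_le_iff₀ haN).1 hn16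
        linarith
      have h3 : 4 / (alp * N) * (n:ℝ) ≤ (n:ℝ) / 4 * (n:ℝ) :=
        mul_le_mul_of_nonneg_right h2 hn0'
      have h4 : Real.exp (n:ℝ) = Real.exp ((n:ℝ)/2) * Real.exp ((n:ℝ)/2) := by
        rw [← Real.exp_add]; ring_nf
      have h5 : (n:ℝ)/2 ≤ Real.exp ((n:ℝ)/2) := by
        have := Real.add_one_le_exp ((n:ℝ)/2); linarith
      have h6 : (n:ℝ) / 4 * (n:ℝ) ≤ Real.exp (n:ℝ) := by
        rw [h4]
        calc (n:ℝ) / 4 * (n:ℝ) = ((n:ℝ)/2) * ((n:ℝ)/2) := by ring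
          _ ≤ ((n:ℝ)/2) * ((n:ℝ)/2) := le_rfl
          _ ≤ Real.exp ((n:ℝ)/2) * Real.exp ((n:ℝ)/2) := by
              apply mul_le_mul h5 h5 (by linarith) (Real.exp_nonneg _)
      linarith
    have hlog2M : 0 ≤ Real.log (2 * (M:ℝ)) := Real.log_nonneg h2M1
    have hB : (2 * (M:ℝ)) ^ Q ≤ Real.exp ((n:ℝ) * (2 / (alp * N) * Real.log (2 * M))) := by
      have h1 : (2 * (M:ℝ)) ^ Q = Real.exp ((Q:ℝ) * Real.log (2 * M)) := by
        rw [Real.exp_nat_mul, Real.exp_log h2M0]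
      rw [h1]
      apply Real.exp_le_exp.2
      calc (Q:ℝ) * Real.log (2 * M) ≤ 2 * n / (alp * N) * Real.log (2 * M) := by gcongr
        _ = (n:ℝ) * (2 / (alp * N) * Real.log (2 * M)) := by ring
    have hC2 : (2:ℝ) ^ n = Real.exp ((n:ℝ) * Real.log 2) := by
      rw [Real.exp_nat_mul, Real.exp_log two_pos]
    have hD : Real.exp ((n:ℝ) * (K + 1)) ≤ L ^ (ε * n / 400) := by
      rw [Real.rpow_def_of_pos hL0]
      apply Real.exp_le_exp.2
      have h1 : ε * (n:ℝ) / 400 * (400 / ε * (K + 1)) ≤ ε * n / 400 * Real.log L := by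
        apply mul_le_mul_of_nonneg_left hlogL (by positivity)
      calc (n:ℝ) * (K + 1) = ε * (n:ℝ) / 400 * (400 / ε * (K + 1)) := by
            field_simp
        _ ≤ ε * n / 400 * Real.log L := h1
        _ = Real.log L * (ε * n / 400) := by ring
    have hLneg : (0:ℝ) ≤ L ^ (-(ε * n / 80)) := Real.rpow_nonneg hL0.le _
    calc (Q:ℝ) * (2 * C)
        = (2 * (Q:ℝ)) * ((2 * (M:ℝ)) ^ Q) * ((2:ℝ) ^ n) * L ^ (-(ε * n / 80)) := by
          rw [hCdef]; ring
      _ ≤ Real.exp n * Real.exp ((n:ℝ) * (2 / (alp * N) * Real.log (2 * M))) *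
            Real.exp ((n:ℝ) * Real.log 2) * L ^ (-(ε * n / 80)) := by
          rw [hC2]
          have hp1 : (0:ℝ) ≤ (2 * (M:ℝ)) ^ Q := by positivity
          gcongr
          all_goals exact Real.exp_nonneg _
      _ = Real.exp ((n:ℝ) * (K + 1)) * L ^ (-(ε * n / 80)) := by
          rw [← Real.exp_add, ← Real.exp_add, hK]; ring_nf
      _ ≤ L ^ (ε * n / 400) * L ^ (-(ε * n / 80)) := by gcongr
      _ = L ^ (-(ε * n / 100)) := by
          rw [← Real.rpow_add hL0]; congr 1; ring
  calc ∑ q ∈ Finset.Icc 1 Q,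
        ∑' R : ℕ, (if ε * n / 20 < (R : ℝ) then
            (M : ℝ) ^ q * (n.choose q : ℝ) * (((R + q).choose q : ℝ)) * L ^ (-(R : ℝ) / 3)
          else 0)
      ≤ ∑ q ∈ Finset.Icc 1 Q, (2 * C) := Finset.sum_le_sum hsum_q
    _ = (Q:ℝ) * (2 * C) := by
        rw [Finset.sum_const, Nat.card_Icc]; simp [nsmul_eq_mul]
    _ ≤ L ^ (-(ε * n / 100)) := hmain
end
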